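/- (Inverse-probability-of-censoring weighting identity, Web Appendix B.) For all real numbers c ≥ 0 and t ≥ 0 with c ≠ t, the integral of the compensated censoring jump against the inverse survival weight telescopes: 1{c ≤ t}/K(c) − ∫_0^{min(c,t)} λ(u)/K(u) du = 1 − 1{c ≥ t}/K(t). -/
import Mathlib


open MeasureTheory

theorem key_integral
    (K K' : ℝ → ℝ) (hK0 : K 0 = 1) (hKpos : ∀ u : ℝ, 0 ≤ u → 0 < K u)
    (hK' : ∀ u ∈ Set.Ici (0:ℝ), HasDerivWithinAt K (K' u) (Set.Ici 0) u)
    (hK'cont : ContinuousOn K' (Set.Ici 0))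
    (lam : ℝ → ℝ) (hlam : ∀ u : ℝ, lam u = -K' u / K u)
    (m : ℝ) (hm : 0 ≤ m) :
    (∫ u in (0:ℝ)..m, lam u / K u) = 1 / K m - 1 := by
  have hKcont : ContinuousOn K (Set.Ici 0) := fun u hu => (hK' u hu).continuousWithinAt
  have hsub : Set.Icc (0:ℝ) m ⊆ Set.Ici 0 := Set.Icc_subset_Ici_self
  have hne : ∀ u ∈ Set.Icc (0:ℝ) m, K u ≠ 0 := fun u hu => (hKpos u hu.1).ne'
  have hcongr : ∀ u ∈ Set.uIcc (0:ℝ) m, lam u / K u = -K' u / (K u) ^ 2 := by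
    intro u hu
    rw [hlam u, div_div, sq]
  rw [intervalIntegral.integral_congr hcongr]
  have hint : IntervalIntegrable (fun u => -K' u / (K u) ^ 2) volume 0 m := by
    apply ContinuousOn.intervalIntegrable
    rw [Set.uIcc_of_le hm]
    exact ((hK'cont.mono hsub).neg.div
      (((hKcont.mono hsub).pow 2)) (fun u hu => pow_ne_zero 2 (hne u hu)))
  have hcontg : ContinuousOn (fun u => (K u)⁻¹) (Set.Icc 0 m) :=
    ((hKcont.mono hsub).inv₀ hne)
  have hderiv : ∀ u ∈ Set.Ioo (0:ℝ) m,
      HasDerivWithinAt (fun u => (K u)⁻¹) (-K' u / (K u) ^ 2) (Set.Ioi u) u := by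
    intro u hu
    have hKat : HasDerivAt K (K' u) u :=
      (hK' u (le_of_lt hu.1)).hasDerivAt (Ici_mem_nhds hu.1)
    exact (hKat.inv (hKpos u hu.1.le).ne').hasDerivWithinAt
  have := intervalIntegral.integral_eq_sub_of_hasDeriv_right_of_le hm hcontg hderiv hint
  rw [this, hK0]
  simp [one_div]

/-- **Inverse-probability-of-censoring weighting identity (Web Appendix B).**
Let `K` be continuously differentiable on `[0, ∞)` with `K 0 = 1` and `K > 0` on `[0, ∞)`,
with hazard `λ u = -K' u / K u`.  Then for all `c ≥ 0`, `t ≥ 0` with `c ≠ t`,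
`1{c ≤ t}/K(c) − ∫_0^{min(c,t)} λ(u)/K(u) du = 1 − 1{c ≥ t}/K(t)`. -/
theorem ipcw_telescoping_identity
    (K K' : ℝ → ℝ) (hK0 : K 0 = 1) (hKpos : ∀ u : ℝ, 0 ≤ u → 0 < K u)
    (hK' : ∀ u ∈ Set.Ici (0:ℝ), HasDerivWithinAt K (K' u) (Set.Ici 0) u)
    (hK'cont : ContinuousOn K' (Set.Ici 0))
    (lam : ℝ → ℝ) (hlam : ∀ u : ℝ, lam u = -K' u / K u) :
    ∀ c t : ℝ, 0 ≤ c → 0 ≤ t → c ≠ t →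
      (if c ≤ t then 1 / K c else 0) - (∫ u in (0:ℝ)..(min c t), lam u / K u)
        = 1 - (if t ≤ c then 1 / K t else 0) := by
  intro c t hc ht hct
  rw [key_integral K K' hK0 hKpos hK' hK'cont lam hlam (min c t) (le_min hc ht)]
  rcases lt_or_gt_of_ne hct with h | h
  · rw [min_eq_left h.le, if_pos h.le, if_neg (not_le.mpr h)]
    ring
  · rw [min_eq_right h.le, if_neg (not_le.mpr h), if_pos h.le]
    ring
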